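/- Let β₁, β₂ ∈ F^{n×n} with tr(β₁) = tr(β₂) = 1, and γ₁, γ₂ ∈ F^{m×m}⊗F^{n×n}⊗F^{m×m} with tr₁(γ₁) = tr₁(γ₂) = 0. Define α_k := Σ_{i,j=1}^m E_{ij}⊗β_k⊗E_{ji} + γ_k and δ_k(C,D) := tr₁₂(α_kᵀ(C⊗I_m − I_m⊗D⊗I_m)) for k = 1,2. Then δ₁ = δ₂ (as functions on F^{mn×mn} × F^{n×n}) if and only if β₁ = β₂ and γ₁ = γ₂. -/

import Mathlib

open Matrix Kronecker

/-- Partial trace over the first two tensor factors: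
`tr12 (A ⊗ B ⊗ C) = tr A * tr B • C`. -/
def tr12 {F : Type*} [AddCommMonoid F] {α β γ : Type*} [Fintype α] [Fintype β]
    (M : Matrix ((α × β) × γ) ((α × β) × γ) F) : Matrix γ γ F :=
  Matrix.of fun c d => ∑ p : α × β, M (p, c) (p, d)

/-- Partial trace over the first tensor factor: `tr1 (A ⊗ B ⊗ C) = tr A • (B ⊗ C)`. -/
def tr1 {F : Type*} [AddCommMonoid F] {α β γ : Type*} [Fintype α]
    (M : Matrix ((α × β) × γ) ((α × β) × γ) F) : Matrix (β × γ) (β × γ) F :=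
  Matrix.of fun p q => ∑ i : α, M ((i, p.1), p.2) ((i, q.1), q.2)

/-- Partial trace over the middle tensor factor: `tr2 (A ⊗ B ⊗ C) = tr B • (A ⊗ C)`. -/
def tr2 {F : Type*} [AddCommMonoid F] {α β γ : Type*} [Fintype β]
    (M : Matrix ((α × β) × γ) ((α × β) × γ) F) : Matrix (α × γ) (α × γ) F :=
  Matrix.of fun p q => ∑ k : β, M ((p.1, k), p.2) ((q.1, k), q.2)

/-- Partial trace over the third tensor factor: `tr3 (A ⊗ B ⊗ C) = tr C • (A ⊗ B)`. -/
def tr3 {F : Type*} [AddCommMonoid F] {α β γ : Type*} [Fintype γ]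
    (M : Matrix ((α × β) × γ) ((α × β) × γ) F) : Matrix (α × β) (α × β) F :=
  Matrix.of fun p q => ∑ c : γ, M (p, c) (q, c)

/-- Partial trace over the second factor of a twofold Kronecker product:
`ptr (B ⊗ C) = tr C • B`. -/
def ptr {F : Type*} [AddCommMonoid F] {α β : Type*} [Fintype β]
    (M : Matrix (α × β) (α × β) F) : Matrix α α F :=
  Matrix.of fun i j => ∑ k : β, M (i, k) (j, k)

/-- Partial transpose in the third tensor factor: `pT3 (A ⊗ B ⊗ C) = A ⊗ B ⊗ Cᵀ`. -/
def pT3 {F : Type*} {α β γ : Type*}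
    (M : Matrix ((α × β) × γ) ((α × β) × γ) F) : Matrix ((α × β) × γ) ((α × β) × γ) F :=
  Matrix.of fun p q => M (p.1, q.2) (q.1, p.2)

/-- Partial transpose in the first two tensor factors:
`pT12 (A ⊗ B ⊗ C) = Aᵀ ⊗ Bᵀ ⊗ C`. -/
def pT12 {F : Type*} {α β γ : Type*}
    (M : Matrix ((α × β) × γ) ((α × β) × γ) F) : Matrix ((α × β) × γ) ((α × β) × γ) F :=
  Matrix.of fun p q => M (q.1, p.2) (p.1, q.2)

lemma lemA {F : Type*} [Field F] {m n : ℕ}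
    (α : Matrix ((Fin m × Fin n) × Fin m) ((Fin m × Fin n) × Fin m) F)
    (q p : Fin m × Fin n) (c e : Fin m) :
    tr12 (αᵀ * ((single q p (1:F)) ⊗ₖ (1 : Matrix (Fin m) (Fin m) F))) c e
      = α (q, e) (p, c) := by
  simp [tr12, Matrix.mul_apply, Matrix.kroneckerMap_apply, Matrix.one_apply,
    Matrix.single, Fintype.sum_prod_type, Finset.sum_ite_eq, Finset.sum_ite_eq',
    Matrix.transpose_apply, Prod.ext_iff, ite_and]

lemma lemB {F : Type*} [Field F] {m n : ℕ} (β : Matrix (Fin n) (Fin n) F) :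
    tr1 (∑ i : Fin m, ∑ j : Fin m,
      single i j (1 : F) ⊗ₖ β ⊗ₖ single j i (1 : F))
      = β ⊗ₖ (1 : Matrix (Fin m) (Fin m) F) := by
  ext ⟨b, e⟩ ⟨b', e'⟩
  simp [tr1, Matrix.kroneckerMap_apply, Matrix.single, Matrix.one_apply,
    Finset.sum_ite_eq, Finset.sum_ite_eq', Matrix.sum_apply, ite_and, eq_comm]

lemma lemC {F : Type*} [AddCommMonoid F] {α β γ : Type*} [Fintype α]
    (M N : Matrix ((α × β) × γ) ((α × β) × γ) F) :
    tr1 (M + N) = tr1 M + tr1 N := by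
  ext p q
  simp [tr1, Finset.sum_add_distrib]

theorem stmt10 {F : Type*} [Field F] {m n : ℕ} (hm : 0 < m)
    (β₁ β₂ : Matrix (Fin n) (Fin n) F) (hβ₁ : trace β₁ = 1) (hβ₂ : trace β₂ = 1)
    (γ₁ γ₂ : Matrix ((Fin m × Fin n) × Fin m) ((Fin m × Fin n) × Fin m) F)
    (hγ₁ : tr1 γ₁ = 0) (hγ₂ : tr1 γ₂ = 0)
    (α₁ α₂ : Matrix ((Fin m × Fin n) × Fin m) ((Fin m × Fin n) × Fin m) F)
    (hα₁ : α₁ = (∑ i : Fin m, ∑ j : Fin m,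
      single i j (1 : F) ⊗ₖ β₁ ⊗ₖ single j i (1 : F)) + γ₁)
    (hα₂ : α₂ = (∑ i : Fin m, ∑ j : Fin m,
      single i j (1 : F) ⊗ₖ β₂ ⊗ₖ single j i (1 : F)) + γ₂) :
    (∀ (C : Matrix (Fin m × Fin n) (Fin m × Fin n) F) (D : Matrix (Fin n) (Fin n) F),
      tr12 (α₁ᵀ * (C ⊗ₖ (1 : Matrix (Fin m) (Fin m) F) -
          ((1 : Matrix (Fin m) (Fin m) F) ⊗ₖ D) ⊗ₖ (1 : Matrix (Fin m) (Fin m) F)))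
        = tr12 (α₂ᵀ * (C ⊗ₖ (1 : Matrix (Fin m) (Fin m) F) -
          ((1 : Matrix (Fin m) (Fin m) F) ⊗ₖ D) ⊗ₖ (1 : Matrix (Fin m) (Fin m) F)))) ↔
    (β₁ = β₂ ∧ γ₁ = γ₂) := by
  constructor
  · intro h
    have hα : α₁ = α₂ := by
      ext ⟨q, e⟩ ⟨p, c⟩
      have h0 := h (single q p (1:F)) 0
      rw [Matrix.kroneckerMap_zero_right _ mul_zero, Matrix.zero_kronecker, sub_zero] at h0
      have := congrFun (congrFun h0 c) e
      rwa [lemA, lemA] at this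
    have hβ : β₁ = β₂ := by
      have h1 : tr1 α₁ = β₁ ⊗ₖ (1 : Matrix (Fin m) (Fin m) F) := by
        rw [hα₁, lemC, lemB, hγ₁, add_zero]
      have h2 : tr1 α₂ = β₂ ⊗ₖ (1 : Matrix (Fin m) (Fin m) F) := by
        rw [hα₂, lemC, lemB, hγ₂, add_zero]
      have h3 : β₁ ⊗ₖ (1 : Matrix (Fin m) (Fin m) F)
          = β₂ ⊗ₖ (1 : Matrix (Fin m) (Fin m) F) := by rw [← h1, ← h2, hα]
      ext b b'
      have := congrFun (congrFun h3 (b, ⟨0, hm⟩)) (b', ⟨0, hm⟩)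
      simpa [Matrix.kroneckerMap_apply] using this
    refine ⟨hβ, ?_⟩
    have := hα
    rw [hα₁, hα₂, hβ] at this
    exact add_left_cancel this
  · rintro ⟨hβ, hγ⟩
    intro C D
    rw [hα₁, hα₂, hβ, hγ]
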